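/- Let s ≥ 1 and let T be the channel with input alphabet {0,1,…,2^s−1} and output alphabet {1,…,2^s−1}×{0,1} defined by T((j,t)|i) = (2^s−1)^{-1}·[b_i·b_j = t], where b_i ∈ F_2^s is the binary representation of i. Then Succ_NS(T) = 1; that is, with non-signaling assistance a single bit can be sent across T with certainty, and T achieves equality in the bound Succ_NS(N) − 1/2 ≤ (2 − 2/r)·(Succ(N) − 1/2) with r = 2^s. -/

import Mathlib

open scoped Matrix Kronecker BigOperators Matrix.Norms.L2Operator ComplexOrder
open Matrix Finset

noncomputable section

/-- A classical channel: `N x y` is the probability of output `y` given input `x`. -/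
def IsChannel {X Y : Type*} [Fintype Y] (N : X → Y → ℝ) : Prop :=
  (∀ x y, 0 ≤ N x y) ∧ ∀ x, ∑ y, N x y = 1

/-- The unassisted one-shot success probability of a channel. -/
def Succ {X Y : Type*} [Fintype X] [Fintype Y] [Nonempty X]
    (N : X → Y → ℝ) : ℝ :=
  ⨆ z : X × X × (Y → Bool),
    (1 / 2) * (∑ y, if z.2.2 y = false then N z.1 y else 0) +
      (1 / 2) * (∑ y, if z.2.2 y = true then N z.2.1 y else 0)

/-- A two-part input-output correlation: `D r s p q` is the probability of
outputs `(p, q)` given inputs `(r, s)`. -/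
def IsCorrelation {R S P Q : Type*} [Fintype P] [Fintype Q]
    (D : R → S → P → Q → ℝ) : Prop :=
  (∀ r s p q, 0 ≤ D r s p q) ∧ ∀ r s, ∑ p, ∑ q, D r s p q = 1

/-- The non-signaling condition for a two-part correlation. -/
def NonSignaling {R S P Q : Type*} [Fintype P] [Fintype Q]
    (D : R → S → P → Q → ℝ) : Prop :=
  (∀ r p s s', ∑ q, D r s p q = ∑ q, D r s' p q) ∧
    ∀ s q r r', ∑ p, D r s p q = ∑ p, D r' s p q

/-- `SuccD N D` : the optimal success probability for transmitting one bit
across the channel `N` with the assistance of the correlation `D`, i.e. the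
maximum over deterministic protocols `(e, f, g, h)`. -/
def SuccD {X Y R S P Q : Type*} [Fintype X] [Fintype Y] [Fintype R] [Fintype S]
    [Fintype P] [Fintype Q] [DecidableEq P] [DecidableEq Q] [DecidableEq Y]
    [Nonempty X] [Nonempty R] [Nonempty S]
    (N : X → Y → ℝ) (D : R → S → P → Q → ℝ) : ℝ :=
  ⨆ π : (Bool → R) × (Bool → P → X) × (Y → S) × (Y → Q → Bool),
    (1 / 2) * ∑ a : Bool, ∑ p, ∑ y, ∑ q,
      D (π.1 a) (π.2.2.1 y) p q * N (π.2.1 a p) y *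
        (if π.2.2.2 y q = a then 1 else 0)

/-- The non-signaling assisted one-shot success probability: the supremum of
`SuccD N D` over all non-signaling correlations `D` (over all finite alphabets). -/
def SuccNS {X Y : Type*} [Fintype X] [Fintype Y] [DecidableEq Y] [Nonempty X]
    (N : X → Y → ℝ) : ℝ :=
  sSup { v : ℝ | ∃ (nR nS nP nQ : ℕ)
    (D : Fin (nR + 1) → Fin (nS + 1) → Fin nP → Fin nQ → ℝ),
    IsCorrelation D ∧ NonSignaling D ∧ v = SuccD N D }

/-- Local-deterministic correlations. -/
def IsLocalDet {R S P Q : Type*} [DecidableEq P] [DecidableEq Q]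
    (D : R → S → P → Q → ℝ) : Prop :=
  ∃ (φ : R → P) (ψ : S → Q), ∀ r s p q,
    D r s p q = (if p = φ r then 1 else 0) * (if q = ψ s then 1 else 0)

/-- Local correlations: finite convex combinations of local-deterministic ones. -/
def IsLocal {R S P Q : Type*} [DecidableEq P] [DecidableEq Q]
    (D : R → S → P → Q → ℝ) : Prop :=
  ∃ (n : ℕ) (w : Fin n → ℝ) (L : Fin n → R → S → P → Q → ℝ),
    (∀ i, 0 ≤ w i) ∧ (∑ i, w i = 1) ∧ (∀ i, IsLocalDet (L i)) ∧
      ∀ r s p q, D r s p q = ∑ i, w i * L i r s p q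

/-- The local fraction of a correlation. -/
def locFrac {R S P Q : Type*} [Fintype P] [Fintype Q] [DecidableEq P] [DecidableEq Q]
    (D : R → S → P → Q → ℝ) : ℝ :=
  sSup { α : ℝ | 0 ≤ α ∧ α ≤ 1 ∧ ∃ L F : R → S → P → Q → ℝ,
    IsLocal L ∧ IsCorrelation F ∧ NonSignaling F ∧
      ∀ r s p q, D r s p q = α * L r s p q + (1 - α) * F r s p q }

/-- Binary quantum correlations: all four alphabets are `Bool`, and the
correlation arises from local POVM measurements on a shared bipartite state. -/
def IsBinaryQuantum (D : Bool → Bool → Bool → Bool → ℝ) : Prop :=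
  ∃ (nA nB : ℕ)
    (Λ : Matrix (Fin (nA + 1) × Fin (nB + 1)) (Fin (nA + 1) × Fin (nB + 1)) ℂ)
    (A : Bool → Bool → Matrix (Fin (nA + 1)) (Fin (nA + 1)) ℂ)
    (B : Bool → Bool → Matrix (Fin (nB + 1)) (Fin (nB + 1)) ℂ),
    Λ.PosSemidef ∧ Λ.trace = 1 ∧
    (∀ r p, (A r p).PosSemidef) ∧ (∀ r, A r false + A r true = 1) ∧
    (∀ s q, (B s q).PosSemidef) ∧ (∀ s, B s false + B s true = 1) ∧
    ∀ r s p q, (D r s p q : ℂ) = ((A r p ⊗ₖ B s q) * Λ).trace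

/-- The binary-quantum assisted one-shot success probability. -/
def SuccQb {X Y : Type*} [Fintype X] [Fintype Y] [DecidableEq Y] [Nonempty X]
    (N : X → Y → ℝ) : ℝ :=
  sSup { v : ℝ | ∃ D : Bool → Bool → Bool → Bool → ℝ,
    IsBinaryQuantum D ∧ v = SuccD N D }

/-- The radius of a finite family of operators on `ℂ^n`, with respect to the
`ℓ²` operator norm: the minimum over Hermitian `C` of `max_i ‖H i − C‖`. -/
def matRad {n : ℕ} {I : Type*} [Fintype I] [Nonempty I]
    (H : I → Matrix (Fin n) (Fin n) ℂ) : ℝ :=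
  ⨅ C : { C : Matrix (Fin n) (Fin n) ℂ // C.IsHermitian }, ⨆ i, ‖H i - C.1‖

/-- The `n`-dimensional entanglement-assisted one-shot success probability. -/
def SuccQn {X Y : Type*} [Fintype X] [Fintype Y] (n : ℕ) (N : X → Y → ℝ) : ℝ :=
  sSup { v : ℝ | ∃ (Λ : Matrix (Fin n × Fin n) (Fin n × Fin n) ℂ)
      (A : Bool → X → Matrix (Fin n) (Fin n) ℂ)
      (B : Y → Bool → Matrix (Fin n) (Fin n) ℂ),
      Λ.PosSemidef ∧ Λ.trace = 1 ∧
      (∀ a x, (A a x).PosSemidef) ∧ (∀ a, ∑ x, A a x = 1) ∧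
      (∀ y b, (B y b).PosSemidef) ∧ (∀ y, B y false + B y true = 1) ∧
      v = (1 / 2) * ∑ a : Bool, ∑ x, ∑ y,
            N x y * (((A a x ⊗ₖ B y a) * Λ).trace).re }

/-- The channel of Prevedel et al. -/
def Mchan : Fin 4 → Fin 6 → ℝ :=
  ![![1/3, 0, 1/3, 0, 1/3, 0],
    ![1/3, 0, 0, 1/3, 0, 1/3],
    ![0, 1/3, 1/3, 0, 0, 1/3],
    ![0, 1/3, 0, 1/3, 1/3, 0]]

/-- The mod-2 inner product of the binary representations of `i` and `j`
(restricted to the first `s` bits), as a `Bool` (`true` = 1). -/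
def binIP (s i j : ℕ) : Bool :=
  decide ((((Finset.range s).filter fun k => i.testBit k ∧ j.testBit k).card) % 2 = 1)

/-- The output distributions `ℓ_i` of the channel `T`:
`ℓ_i (j, t) = (2^s − 1)⁻¹ · [b_i · b_j = t]`, where the output pair `(j, t)`
with `j ∈ {1, …, 2^s − 1}` is encoded as `(j', t) : Fin (2^s - 1) × Bool`
with `j = j' + 1`, and `t = true` encodes `1`. -/
def Tchan (s : ℕ) : Fin (2 ^ s) → Fin (2 ^ s - 1) × Bool → ℝ :=
  fun i jt =>
    if binIP s i.val (jt.1.val + 1) = jt.2 then ((2 : ℝ) ^ s - 1)⁻¹ else 0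


-- Auxiliary lemmas
noncomputable def ipZ (s i j : ℕ) : ZMod 2 :=
  ∑ k ∈ Finset.range s, (if i.testBit k ∧ j.testBit k then 1 else 0)

lemma binIP_eq (s i j : ℕ) : binIP s i j = decide (ipZ s i j = 1) := by
  have h : ipZ s i j = ((((Finset.range s).filter fun k => i.testBit k ∧ j.testBit k).card : ℕ) : ZMod 2) := by
    rw [ipZ, Finset.sum_boole]
  have h2 : (ipZ s i j = 1) ↔ ((((Finset.range s).filter fun k => i.testBit k ∧ j.testBit k).card) % 2 = 1) := by
    rw [h]
    set n := (((Finset.range s).filter fun k => i.testBit k ∧ j.testBit k).card)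
    rw [show ((n : ZMod 2)) = ((n % 2 : ℕ) : ZMod 2) by rw [ZMod.natCast_mod]]
    have := Nat.mod_two_eq_zero_or_one n
    rcases this with h' | h' <;> rw [h'] <;> simp
  rw [binIP]
  exact (decide_eq_decide.mpr h2.symm)

lemma decide_add_one (u v : ZMod 2) :
    decide (u + v = 1) = xor (decide (u = 1)) (decide (v = 1)) := by
  revert u v; decide

lemma binIP_xor (s a b j : ℕ) : binIP s (a ^^^ b) j = xor (binIP s a j) (binIP s b j) := by
  have h : ipZ s (a ^^^ b) j = ipZ s a j + ipZ s b j := by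
    rw [ipZ, ipZ, ipZ, ← Finset.sum_add_distrib]
    refine Finset.sum_congr rfl fun k _ => ?_
    rw [Nat.testBit_xor]
    cases a.testBit k <;> cases b.testBit k <;> cases j.testBit k <;> simp <;> decide
  rw [binIP_eq, binIP_eq, binIP_eq, h, decide_add_one]

lemma binIP_zero_left (s j : ℕ) : binIP s 0 j = false := by
  simp [binIP, Nat.zero_testBit]

lemma binIP_comm (s i j : ℕ) : binIP s i j = binIP s j i := by
  rw [binIP, binIP]
  have : ((Finset.range s).filter fun k => i.testBit k ∧ j.testBit k) =
      ((Finset.range s).filter fun k => j.testBit k ∧ i.testBit k) := by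
    ext m; simp [and_comm]
  rw [this]

lemma binIP_zero_right (s i : ℕ) : binIP s i 0 = false := by
  rw [binIP_comm]; exact binIP_zero_left s i

lemma binIP_two_pow (s a k : ℕ) (hk : k < s) : binIP s a (2 ^ k) = a.testBit k := by
  rw [binIP]
  have h : ((Finset.range s).filter fun m => a.testBit m ∧ (2^k).testBit m) =
      if a.testBit k then {k} else ∅ := by
    ext m
    simp only [Finset.mem_filter, Finset.mem_range, Nat.testBit_two_pow]
    by_cases h : a.testBit k <;> simp [h, Finset.mem_singleton]
    · constructor
      · rintro ⟨_, _, h2⟩; omega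
      · rintro rfl; exact ⟨hk, h, rfl⟩
    · intro _ hm hkm; subst hkm; exact h hm
  rw [h]
  cases h' : a.testBit k <;> simp [h']

lemma testBit_lt (d s k : ℕ) (hds : d < 2^s) (hk : d.testBit k = true) : k < s := by
  by_contra h
  have : d < 2^k := lt_of_lt_of_le hds (Nat.pow_le_pow_right (by norm_num) (by omega))
  rw [Nat.testBit_eq_false_of_lt this] at hk; exact Bool.false_ne_true hk

lemma binIP_count (s d : ℕ) (hd : d ≠ 0) (hds : d < 2 ^ s) :
    (((Finset.range (2 ^ s)).filter fun j => binIP s d j = true).card) = 2 ^ (s - 1) := by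
  obtain ⟨k, hk, -⟩ := Nat.exists_most_significant_bit hd
  have hks : k < s := testBit_lt d s k hds hk
  have hflip : ∀ j, binIP s d (j ^^^ 2 ^ k) = !(binIP s d j) := by
    intro j
    rw [binIP_comm, binIP_xor, binIP_comm s j d, binIP_comm s (2^k) d, binIP_two_pow s d k hks, hk]
    cases binIP s d j <;> rfl
  have hmem : ∀ j, j < 2 ^ s → j ^^^ 2 ^ k < 2 ^ s := fun j hj =>
    Nat.xor_lt_two_pow hj (Nat.pow_lt_pow_right (by norm_num) hks)
  set T := (Finset.range (2 ^ s)).filter fun j => binIP s d j = true with hT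
  set F := (Finset.range (2 ^ s)).filter fun j => ¬ (binIP s d j = true) with hF
  have hinv : ∀ j : ℕ, (j ^^^ 2 ^ k) ^^^ 2 ^ k = j := by
    intro j; rw [Nat.xor_assoc, Nat.xor_self, Nat.xor_zero]
  have hcard : T.card = F.card := by
    apply Finset.card_bij' (fun j _ => j ^^^ 2 ^ k) (fun j _ => j ^^^ 2 ^ k)
    · intro a _; exact hinv a
    · intro a _; exact hinv a
    · intro a ha
      simp only [hT, hF, Finset.mem_filter, Finset.mem_range] at ha ⊢
      exact ⟨hmem a ha.1, by rw [hflip, ha.2]; simp⟩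
    · intro a ha
      simp only [hT, hF, Finset.mem_filter, Finset.mem_range] at ha ⊢
      refine ⟨hmem a ha.1, ?_⟩
      rw [hflip]
      cases h : binIP s d a
      · rfl
      · exact absurd h ha.2
  have hsum : T.card + F.card = 2 ^ s := by
    rw [hT, hF, Finset.card_filter_add_card_filter_not, Finset.card_range]
  have h2 : 2 ^ s = 2 * 2 ^ (s - 1) := by
    rw [← pow_succ']
    congr 1
    have : 1 ≤ s := by
      by_contra h
      interval_cases s <;> omega
    omega
  omega

/-- Sum of an indicator of `binIP s d · = c` over the full range. -/
lemma binIP_sum_range (s d : ℕ) (c : Bool) (v : ℝ) (hd : d ≠ 0) (hds : d < 2 ^ s) :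
    ∑ j ∈ Finset.range (2 ^ s), (if binIP s d j = c then v else 0) =
      (2 ^ (s - 1) : ℕ) * v := by
  rw [← Finset.sum_filter, Finset.sum_const, nsmul_eq_mul]
  congr 2
  cases c
  · have hneg := Finset.card_filter_add_card_filter_not
      (s := Finset.range (2 ^ s)) (p := fun j => binIP s d j = true)
    rw [Finset.card_range, binIP_count s d hd hds] at hneg
    have hEq : ((Finset.range (2 ^ s)).filter fun j => binIP s d j = false) =
        ((Finset.range (2 ^ s)).filter fun j => ¬ (binIP s d j = true)) := by
      apply Finset.filter_congr
      intro j _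
      cases binIP s d j <;> simp
    rw [hEq, ← Nat.cast_inj (R := ℤ)]
    have h2 : 2 ^ s = 2 * 2 ^ (s - 1) := by
      rw [← pow_succ']
      congr 1
      have hd1 : 1 ≤ s := by by_contra h; interval_cases s <;> omega
      omega
    omega
  · exact binIP_count s d hd hds

lemma binIP_sum_fin (s d : ℕ) (v : ℝ) (hd : d ≠ 0) (hds : d < 2 ^ s) :
    ∑ j : Fin (2 ^ s - 1), (if binIP s d (j.val + 1) = true then v else 0) =
      (2 ^ (s - 1) : ℕ) * v := by
  rw [Fin.sum_univ_eq_sum_range (fun j => if binIP s d (j + 1) = true then v else 0)]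
  have hpow : 1 ≤ 2 ^ s := Nat.one_le_two_pow
  have key := Finset.sum_range_succ' (fun j => if binIP s d j = true then v else 0) (2 ^ s - 1)
  rw [show 2 ^ s - 1 + 1 = 2 ^ s by omega] at key
  rw [binIP_sum_range s d true v hd hds] at key
  rw [binIP_zero_right] at key
  simp only [Bool.false_eq_true, if_false, add_zero] at key
  exact key.symm

lemma two_pow_sub_one_pos (s : ℕ) (hs : 1 ≤ s) : (0:ℝ) < (2:ℝ) ^ s - 1 := by
  have : (2:ℝ) ^ 1 ≤ (2:ℝ) ^ s := pow_le_pow_right₀ (by norm_num) hs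
  simp at this; linarith

lemma cast_two_pow_sub_one (s : ℕ) : ((2 ^ s - 1 : ℕ) : ℝ) = (2:ℝ) ^ s - 1 := by
  have hpow : 1 ≤ 2 ^ s := Nat.one_le_two_pow
  push_cast [hpow]
  ring

lemma tchan_sum (s : ℕ) (hs : 1 ≤ s) (i : Fin (2 ^ s)) : ∑ y, Tchan s i y = 1 := by
  rw [Fintype.sum_prod_type]
  have h1 : ∀ j : Fin (2 ^ s - 1), ∑ t : Bool, Tchan s i (j, t) = ((2:ℝ) ^ s - 1)⁻¹ := by
    intro j
    rw [Fintype.sum_bool]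
    unfold Tchan
    cases h : binIP s i.val (j.val + 1) <;> simp [h]
  rw [Finset.sum_congr rfl (fun j _ => h1 j), Finset.sum_const, Finset.card_univ,
    Fintype.card_fin, nsmul_eq_mul, cast_two_pow_sub_one]
  have := two_pow_sub_one_pos s hs
  field_simp


lemma succD_le_one {X Y R S P Q : Type*} [Fintype X] [Fintype Y] [Fintype R] [Fintype S]
    [Fintype P] [Fintype Q] [DecidableEq P] [DecidableEq Q] [DecidableEq Y]
    [Nonempty X] [Nonempty R] [Nonempty S]
    (N : X → Y → ℝ) (D : R → S → P → Q → ℝ)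
    (hN : IsChannel N) (hD : IsCorrelation D) (hNS : NonSignaling D) :
    SuccD N D ≤ 1 := by
  apply ciSup_le
  intro π
  obtain ⟨e, f, g, h⟩ := π
  dsimp only
  have key : ∀ a : Bool,
      (∑ p, ∑ y, ∑ q, D (e a) (g y) p q * N (f a p) y * (if h y q = a then 1 else 0)) ≤ 1 := by
    intro a
    obtain ⟨s₀⟩ := ‹Nonempty S›
    have step1 : (∑ p, ∑ y, ∑ q, D (e a) (g y) p q * N (f a p) y * (if h y q = a then 1 else 0))
        ≤ ∑ p, ∑ y, ∑ q, D (e a) (g y) p q * N (f a p) y := by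
      refine Finset.sum_le_sum fun p _ => Finset.sum_le_sum fun y _ =>
        Finset.sum_le_sum fun q _ => ?_
      have h1 : (0:ℝ) ≤ D (e a) (g y) p q * N (f a p) y := mul_nonneg (hD.1 _ _ _ _) (hN.1 _ _)
      split_ifs
      · rw [mul_one]
      · rw [mul_zero]; exact h1
    have step2 : (∑ p, ∑ y, ∑ q, D (e a) (g y) p q * N (f a p) y)
        = ∑ p, (∑ q, D (e a) s₀ p q) * (∑ y, N (f a p) y) := by
      refine Finset.sum_congr rfl fun p _ => ?_
      rw [Finset.mul_sum]
      refine Finset.sum_congr rfl fun y _ => ?_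
      rw [← Finset.sum_mul, hNS.1 (e a) p (g y) s₀, Finset.sum_mul]
    have step3 : (∑ p, (∑ q, D (e a) s₀ p q) * (∑ y, N (f a p) y)) = 1 := by
      have h3 : ∀ p, (∑ q, D (e a) s₀ p q) * (∑ y, N (f a p) y) = ∑ q, D (e a) s₀ p q := by
        intro p; rw [hN.2 (f a p), mul_one]
      rw [Finset.sum_congr rfl (fun p _ => h3 p)]
      exact hD.2 (e a) s₀
    calc (∑ p, ∑ y, ∑ q, D (e a) (g y) p q * N (f a p) y * (if h y q = a then 1 else 0))
        ≤ ∑ p, ∑ y, ∑ q, D (e a) (g y) p q * N (f a p) y := step1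
      _ = ∑ p, (∑ q, D (e a) s₀ p q) * (∑ y, N (f a p) y) := step2
      _ = 1 := step3
  have hsum : (∑ a : Bool, ∑ p, ∑ y, ∑ q,
      D (e a) (g y) p q * N (f a p) y * (if h y q = a then 1 else 0)) ≤ 2 := by
    rw [Fintype.sum_bool]
    linarith [key true, key false]
  linarith


noncomputable def nsBox (s : ℕ) : Fin 2 → Fin (2 ^ s - 2 + 1) → Fin (2 ^ s) → Fin 2 → ℝ :=
  fun r sj p q =>
    if xor (binIP s p.val (sj.val + 1)) (decide (r.val = 1)) = decide (q.val = 1)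
    then ((2:ℝ) ^ s)⁻¹ else 0

lemma sum_fin2_ind (b : Bool) (v : ℝ) :
    ∑ q : Fin 2, (if b = decide (q.val = 1) then v else 0) = v := by
  rw [Fin.sum_univ_two]
  cases b <;> simp

lemma two_le_two_pow (s : ℕ) (hs : 1 ≤ s) : 2 ≤ 2 ^ s := by
  calc 2 = 2 ^ 1 := (pow_one 2).symm
    _ ≤ 2 ^ s := Nat.pow_le_pow_right (by norm_num) hs

lemma nsBox_corr (s : ℕ) (hs : 1 ≤ s) : IsCorrelation (nsBox s) := by
  constructor
  · intro r sj p q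
    unfold nsBox
    split_ifs
    · positivity
    · exact le_refl 0
  · intro r sj
    have h1 : ∀ p : Fin (2 ^ s), ∑ q : Fin 2, nsBox s r sj p q = ((2:ℝ) ^ s)⁻¹ := by
      intro p
      unfold nsBox
      exact sum_fin2_ind _ _
    rw [Finset.sum_congr rfl (fun p _ => h1 p), Finset.sum_const, Finset.card_univ,
      Fintype.card_fin, nsmul_eq_mul]
    have h2 : (((2 ^ s : ℕ)) : ℝ) = (2:ℝ) ^ s := by push_cast; ring
    rw [h2]
    field_simp

lemma nsBox_ns (s : ℕ) (hs : 1 ≤ s) : NonSignaling (nsBox s) := by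
  constructor
  · intro r p sj sj'
    unfold nsBox
    rw [sum_fin2_ind, sum_fin2_ind]
  · intro sj q r r'
    have hgen : ∀ r'' : Fin 2, ∑ p : Fin (2 ^ s), nsBox s r'' sj p q =
        ((2 ^ (s - 1) : ℕ) : ℝ) * ((2:ℝ) ^ s)⁻¹ := by
      intro r''
      have hx : ∀ (b rb qb : Bool), (xor b rb = qb) = (b = xor qb rb) := by decide
      have hterm : ∀ p : Fin (2 ^ s), nsBox s r'' sj p q =
          (if binIP s (sj.val + 1) p.val = xor (decide (q.val = 1)) (decide (r''.val = 1))
            then ((2:ℝ) ^ s)⁻¹ else 0) := by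
        intro p
        unfold nsBox
        simp only [hx, binIP_comm s p.val (sj.val + 1)]
      rw [Finset.sum_congr rfl (fun p _ => hterm p)]
      rw [Fin.sum_univ_eq_sum_range (fun j => if binIP s (sj.val + 1) j =
        xor (decide (q.val = 1)) (decide (r''.val = 1)) then ((2:ℝ) ^ s)⁻¹ else 0)]
      apply binIP_sum_range
      · omega
      · have h2 := two_le_two_pow s hs
        have := sj.isLt
        omega
    rw [hgen r, hgen r']


lemma tchan_channel (s : ℕ) (hs : 1 ≤ s) : IsChannel (Tchan s) := by
  constructor
  · intro x y
    unfold Tchan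
    split_ifs
    · have := two_pow_sub_one_pos s hs
      positivity
    · exact le_refl 0
  · exact tchan_sum s hs

lemma inner_val (s : ℕ) (a b : Bool) (v2 c : ℝ) :
    ∑ t : Bool, ∑ q : Fin 2,
      (if xor b (decide ((if a then (1 : Fin 2) else 0).val = 1)) = decide (q.val = 1)
        then v2 else 0)
        * (if b = t then c else 0)
        * (if xor t (decide (q.val = 1)) = a then 1 else 0) = v2 * c := by
  rw [Fintype.sum_bool, Fin.sum_univ_two, Fin.sum_univ_two]
  cases a <;> cases b <;> norm_num

lemma succD_nsBox (s : ℕ) (hs : 1 ≤ s) : SuccD (Tchan s) (nsBox s) = 1 := by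
  have h2 := two_le_two_pow s hs
  apply le_antisymm (succD_le_one _ _ (tchan_channel s hs) (nsBox_corr s hs) (nsBox_ns s hs))
  set e : Bool → Fin 2 := fun a => if a then 1 else 0 with he
  set f : Bool → Fin (2 ^ s) → Fin (2 ^ s) := fun _ p => p with hf
  set g : Fin (2 ^ s - 1) × Bool → Fin (2 ^ s - 2 + 1) :=
    fun y => ⟨y.1.val, by have := y.1.isLt; omega⟩ with hg
  set h : Fin (2 ^ s - 1) × Bool → Fin 2 → Bool :=
    fun y q => xor y.2 (decide (q.val = 1)) with hh
  have hval : (1 / 2 : ℝ) * ∑ a : Bool, ∑ p, ∑ y, ∑ q,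
      nsBox s (e a) (g y) p q * Tchan s (f a p) y *
        (if h y q = a then 1 else 0) = 1 := by
    have hinner : ∀ (a : Bool) (p : Fin (2 ^ s)),
        (∑ y, ∑ q, nsBox s (e a) (g y) p q * Tchan s (f a p) y *
          (if h y q = a then 1 else 0)) =
        ((2 ^ s - 1 : ℕ) : ℝ) * (((2:ℝ) ^ s)⁻¹ * ((2:ℝ) ^ s - 1)⁻¹) := by
      intro a p
      rw [Fintype.sum_prod_type]
      have hj : ∀ j : Fin (2 ^ s - 1),
          (∑ t : Bool, ∑ q : Fin 2, nsBox s (e a) (g (j, t)) p q * Tchan s (f a p) (j, t) *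
            (if h (j, t) q = a then 1 else 0)) =
          ((2:ℝ) ^ s)⁻¹ * ((2:ℝ) ^ s - 1)⁻¹ := by
        intro j
        have := inner_val s a (binIP s p.val (j.val + 1)) ((2:ℝ) ^ s)⁻¹ ((2:ℝ) ^ s - 1)⁻¹
        exact this
      rw [Finset.sum_congr rfl (fun j _ => hj j), Finset.sum_const, Finset.card_univ,
        Fintype.card_fin, nsmul_eq_mul]
    have hp : ∀ a : Bool,
        (∑ p, ∑ y, ∑ q, nsBox s (e a) (g y) p q * Tchan s (f a p) y *
          (if h y q = a then 1 else 0)) =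
        ((2 ^ s : ℕ) : ℝ) * (((2 ^ s - 1 : ℕ) : ℝ) * (((2:ℝ) ^ s)⁻¹ * ((2:ℝ) ^ s - 1)⁻¹)) := by
      intro a
      rw [Finset.sum_congr rfl (fun p _ => hinner a p), Finset.sum_const, Finset.card_univ,
        Fintype.card_fin, nsmul_eq_mul]
    rw [Fintype.sum_bool, hp true, hp false, cast_two_pow_sub_one]
    have hpos := two_pow_sub_one_pos s hs
    have hc : ((2 ^ s : ℕ) : ℝ) = (2:ℝ) ^ s := by push_cast; ring
    rw [hc]
    have hne : ((2:ℝ) ^ s) ≠ 0 := by positivity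
    field_simp
    norm_num
  refine le_trans (le_of_eq hval.symm) ?_
  unfold SuccD
  exact le_ciSup (f := fun π : (Bool → Fin 2) × (Bool → Fin (2 ^ s) → Fin (2 ^ s)) ×
      ((Fin (2 ^ s - 1) × Bool) → Fin (2 ^ s - 2 + 1)) ×
      ((Fin (2 ^ s - 1) × Bool) → Fin 2 → Bool) =>
      (1 / 2 : ℝ) * ∑ a : Bool, ∑ p, ∑ y, ∑ q,
        nsBox s (π.1 a) (π.2.2.1 y) p q * Tchan s (π.2.1 a p) y *
          (if π.2.2.2 y q = a then 1 else 0))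
    (Set.Finite.bddAbove (Set.finite_range _)) (e, f, g, h)

lemma succNS_tchan (s : ℕ) (hs : 1 ≤ s) : SuccNS (Tchan s) = 1 := by
  have hub : ∀ v ∈ { v : ℝ | ∃ (nR nS nP nQ : ℕ)
      (D : Fin (nR + 1) → Fin (nS + 1) → Fin nP → Fin nQ → ℝ),
      IsCorrelation D ∧ NonSignaling D ∧ v = SuccD (Tchan s) D }, v ≤ 1 := by
    rintro v ⟨nR, nS, nP, nQ, D, hD, hNSD, rfl⟩
    exact succD_le_one _ _ (tchan_channel s hs) hD hNSD
  have hmem : (1:ℝ) ∈ { v : ℝ | ∃ (nR nS nP nQ : ℕ)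
      (D : Fin (nR + 1) → Fin (nS + 1) → Fin nP → Fin nQ → ℝ),
      IsCorrelation D ∧ NonSignaling D ∧ v = SuccD (Tchan s) D } := by
    refine ⟨1, 2 ^ s - 2, 2 ^ s, 2, nsBox s, nsBox_corr s hs, nsBox_ns s hs,
      (succD_nsBox s hs).symm⟩
  exact le_antisymm (csSup_le ⟨1, hmem⟩ hub) (le_csSup ⟨1, hub⟩ hmem)


lemma max_pair (b0 b1 : Bool) (c : ℝ) (hc : 0 ≤ c) :
    ∑ t : Bool, max (if b0 = t then c else 0) (if b1 = t then c else 0) =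
      c + (if b0 = b1 then 0 else c) := by
  rw [Fintype.sum_bool]
  cases b0 <;> cases b1 <;> simp [max_eq_left hc, max_eq_right hc]

lemma succ_tchan (s : ℕ) (hs : 1 ≤ s) :
    Succ (Tchan s) = 1 / 2 + (2:ℝ) ^ s * ((2:ℝ) ^ s - 1)⁻¹ / 4 := by
  have h2 := two_le_two_pow s hs
  have hpos := two_pow_sub_one_pos s hs
  set c : ℝ := ((2:ℝ) ^ s - 1)⁻¹ with hcdef
  have hc0 : (0:ℝ) ≤ c := by positivity
  have hcc : ((2 ^ s - 1 : ℕ) : ℝ) * c = 1 := by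
    rw [cast_two_pow_sub_one, hcdef]
    field_simp
  set K : ℝ := ((2 ^ (s - 1) : ℕ) : ℝ) with hKdef
  have hK : 2 * K = (2:ℝ) ^ s := by
    rw [hKdef]
    push_cast
    rw [← pow_succ']
    congr 1
    omega
  apply le_antisymm
  · apply ciSup_le
    intro z
    obtain ⟨x0, x1, g⟩ := z
    dsimp only
    have hstep : (1 / 2 : ℝ) * (∑ y, if g y = false then Tchan s x0 y else 0) +
        (1 / 2 : ℝ) * (∑ y, if g y = true then Tchan s x1 y else 0) ≤
        (1 / 2 : ℝ) * ∑ y, max (Tchan s x0 y) (Tchan s x1 y) := by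
      rw [← mul_add, ← Finset.sum_add_distrib]
      apply mul_le_mul_of_nonneg_left _ (by norm_num)
      apply Finset.sum_le_sum
      intro y _
      cases hgy : g y
      · simp only [hgy]
        simp only [if_true, if_neg (by simp : ¬(false = true)), add_zero]
        exact le_max_left _ _
      · simp only [hgy]
        simp only [if_neg (by simp : ¬(true = false)), if_true, zero_add]
        exact le_max_right _ _
    have hmax : (∑ y, max (Tchan s x0 y) (Tchan s x1 y)) =
        ∑ j : Fin (2 ^ s - 1), (c + (if binIP s x0.val (j.val + 1) = binIP s x1.val (j.val + 1)
          then 0 else c)) := by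
      rw [Fintype.sum_prod_type]
      refine Finset.sum_congr rfl fun j _ => ?_
      have := max_pair (binIP s x0.val (j.val + 1)) (binIP s x1.val (j.val + 1)) c hc0
      rw [← this]
      rfl
    rw [hmax] at hstep
    rw [Finset.sum_add_distrib, Finset.sum_const, Finset.card_univ, Fintype.card_fin,
      nsmul_eq_mul, hcc] at hstep
    by_cases hx : x0 = x1
    · subst hx
      have hz : (∑ j : Fin (2 ^ s - 1), (if binIP s x0.val (j.val + 1) = binIP s x0.val (j.val + 1)
          then (0:ℝ) else c)) = 0 := by
        apply Finset.sum_eq_zero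
        intro j _
        simp
      rw [hz] at hstep
      have : (0:ℝ) ≤ (2:ℝ) ^ s * c / 4 := by positivity
      linarith
    · have hd0 : x0.val ^^^ x1.val ≠ 0 := by
        intro hcon
        exact hx (Fin.ext (xor_eq_zero_iff.mp hcon))
      have hdlt : x0.val ^^^ x1.val < 2 ^ s := Nat.xor_lt_two_pow x0.isLt x1.isLt
      have hrw : ∀ j : Fin (2 ^ s - 1),
          (if binIP s x0.val (j.val + 1) = binIP s x1.val (j.val + 1) then (0:ℝ) else c) =
          (if binIP s (x0.val ^^^ x1.val) (j.val + 1) = true then c else 0) := by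
        intro j
        rw [binIP_xor]
        cases hb0 : binIP s x0.val (j.val + 1) <;> cases hb1 : binIP s x1.val (j.val + 1) <;> simp
      rw [Finset.sum_congr rfl (fun j _ => hrw j), binIP_sum_fin s _ c hd0 hdlt] at hstep
      have : (1 / 2 : ℝ) * (1 + K * c) = 1 / 2 + (2:ℝ) ^ s * c / 4 := by
        rw [show K = (2:ℝ) ^ s / 2 by linarith]
        ring
      rw [← hKdef] at hstep
      linarith
  · have hx0 : (0:ℕ) < 2 ^ s := by omega
    have hx1 : (1:ℕ) < 2 ^ s := by omega
    set x0 : Fin (2 ^ s) := ⟨0, hx0⟩ with hx0def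
    set x1 : Fin (2 ^ s) := ⟨1, hx1⟩ with hx1def
    set g : Fin (2 ^ s - 1) × Bool → Bool := fun y => y.2 with hgdef
    have hS0 : (∑ y, if g y = false then Tchan s x0 y else 0) = 1 := by
      rw [Fintype.sum_prod_type]
      have hj : ∀ j : Fin (2 ^ s - 1),
          (∑ t : Bool, if g (j, t) = false then Tchan s x0 (j, t) else 0) = c := by
        intro j
        rw [Fintype.sum_bool]
        show (if (true : Bool) = false then Tchan s x0 (j, true) else 0) +
          (if (false : Bool) = false then Tchan s x0 (j, false) else 0) = c
        rw [if_neg (by simp), if_pos rfl, zero_add]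
        show (if binIP s 0 (j.val + 1) = false then c else 0) = c
        rw [binIP_zero_left]
        simp
      rw [Finset.sum_congr rfl (fun j _ => hj j), Finset.sum_const, Finset.card_univ,
        Fintype.card_fin, nsmul_eq_mul, hcc]
    have hS1 : (∑ y, if g y = true then Tchan s x1 y else 0) = K * c := by
      rw [Fintype.sum_prod_type]
      have hj : ∀ j : Fin (2 ^ s - 1),
          (∑ t : Bool, if g (j, t) = true then Tchan s x1 (j, t) else 0) =
          (if binIP s 1 (j.val + 1) = true then c else 0) := by
        intro j
        rw [Fintype.sum_bool]
        show (if (true : Bool) = true then Tchan s x1 (j, true) else 0) +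
          (if (false : Bool) = true then Tchan s x1 (j, false) else 0) =
          (if binIP s 1 (j.val + 1) = true then c else 0)
        rw [if_pos rfl, if_neg (by simp), add_zero]
        rfl
      rw [Finset.sum_congr rfl (fun j _ => hj j)]
      exact binIP_sum_fin s 1 c (by norm_num) (by omega)
    have hval : (1 / 2 : ℝ) * (∑ y, if g y = false then Tchan s x0 y else 0) +
        (1 / 2 : ℝ) * (∑ y, if g y = true then Tchan s x1 y else 0) =
        1 / 2 + (2:ℝ) ^ s * c / 4 := by
      rw [hS0, hS1, show K = (2:ℝ) ^ s / 2 by linarith]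
      ring
    refine le_trans (le_of_eq hval.symm) ?_
    unfold Succ
    exact le_ciSup (f := fun z : Fin (2 ^ s) × Fin (2 ^ s) × ((Fin (2 ^ s - 1) × Bool) → Bool) =>
        (1 / 2 : ℝ) * (∑ y, if z.2.2 y = false then Tchan s z.1 y else 0) +
          (1 / 2 : ℝ) * (∑ y, if z.2.2 y = true then Tchan s z.2.1 y else 0))
      (Set.Finite.bddAbove (Set.finite_range _)) (x0, x1, g)

/-- For the channel `T`: with non-signaling assistance, one bit can be sent
perfectly, `Succ_NS(T) = 1`, and `T` achieves equality in the bound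
`Succ_NS(N) − 1/2 ≤ (2 − 2/r)(Succ(N) − 1/2)` with `r = 2^s`. -/
theorem tchan_succNS_eq_one (s : ℕ) (hs : 1 ≤ s) :
    SuccNS (Tchan s) = 1 ∧
      SuccNS (Tchan s) - 1 / 2 =
        (2 - 2 / (2 : ℝ) ^ s) * (Succ (Tchan s) - 1 / 2) := by
  have h1 := succNS_tchan s hs
  have h2 := succ_tchan s hs
  refine ⟨h1, ?_⟩
  rw [h1, h2]
  have hpos := two_pow_sub_one_pos s hs
  have hne : ((2:ℝ) ^ s) ≠ 0 := by positivity
  have hne1 : ((2:ℝ) ^ s - 1) ≠ 0 := ne_of_gt hpos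
  field_simp
  ring

end
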